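/- An R-module M is dual Baer if and only if for every nonempty index set Λ and every R-homomorphism f: M^(Λ) → M (from the direct sum of copies of M), the image of f is a direct summand of M. -/

import Mathlib

universe u v

/-- `M` is a dual Baer module: for every submodule `N` of `M`, the right ideal
`Hom(M,N)` of `End(M)` is generated by an idempotent. -/
def IsDualBaerModule (R : Type u) [Ring R] (M : Type v) [AddCommGroup M]
    [Module R M] : Prop :=
  ∀ N : Submodule R M, ∃ e : Module.End R M, IsIdempotentElem e ∧
    {f : Module.End R M | LinearMap.range f ≤ N} = Set.range fun s => e * s

lemma isCompl_range_ker_of_idem {R : Type u} [Ring R] {M : Type v} [AddCommGroup M]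
    [Module R M] (e : Module.End R M) (he : IsIdempotentElem e) :
    IsCompl (LinearMap.range e) (LinearMap.ker e) := by
  have h := LinearMap.isCompl_of_proj
    (f := e.codRestrict (LinearMap.range e) (fun x => LinearMap.mem_range_self e x))
    (fun x => ?_)
  · rwa [LinearMap.ker_codRestrict] at h
  · obtain ⟨x, hx⟩ := x
    obtain ⟨y, rfl⟩ := hx
    exact Subtype.ext (DFunLike.congr_fun he y)

theorem stmt13 (R : Type u) [Ring R] (M : Type v) [AddCommGroup M] [Module R M] :
    IsDualBaerModule R M ↔
      ∀ (Λ : Type v), Nonempty Λ → ∀ f : (Λ →₀ M) →ₗ[R] M,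
        ∃ p : Submodule R M, IsCompl (LinearMap.range f) p := by
  constructor
  · intro hB Λ _ f
    obtain ⟨e, he, hset⟩ := hB (LinearMap.range f)
    have hrange : LinearMap.range e = LinearMap.range f := by
      apply le_antisymm
      · have : e ∈ {g : Module.End R M | LinearMap.range g ≤ LinearMap.range f} := by
          rw [hset]; exact ⟨1, mul_one e⟩
        exact this
      · rintro x ⟨l, rfl⟩
        have hl : f l = l.sum fun lam m => f (Finsupp.single lam m) := by
          conv_lhs => rw [← Finsupp.sum_single l]
          rw [map_finsuppSum]
        rw [hl]
        refine Submodule.finsuppSum_mem _ _ _ _ (fun lam _ => ?_)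
        have hg : (f ∘ₗ Finsupp.lsingle lam) ∈
            {g : Module.End R M | LinearMap.range g ≤ LinearMap.range f} :=
          LinearMap.range_comp_le_range _ _
        rw [hset] at hg
        obtain ⟨s, hs⟩ := hg
        have : f (Finsupp.single lam (l lam)) = e (s (l lam)) := by
          have := DFunLike.congr_fun hs (l lam)
          exact this.symm
        rw [this]
        exact LinearMap.mem_range_self e _
    exact ⟨LinearMap.ker e, hrange ▸ isCompl_range_ker_of_idem e he⟩
  · intro h N
    set Λ := {g : Module.End R M // LinearMap.range g ≤ N} with hΛ
    have hne : Nonempty Λ := ⟨⟨0, by simp⟩⟩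
    set f : (Λ →₀ M) →ₗ[R] M := Finsupp.lsum ℕ (fun g : Λ => g.1) with hf
    obtain ⟨p, hp⟩ := h Λ hne f
    set e : Module.End R M :=
      (LinearMap.range f).subtype ∘ₗ (LinearMap.range f).projectionOnto p hp with hedef
    have heid : ∀ x ∈ LinearMap.range f, e x = x := by
      intro x hx
      simp only [hedef, LinearMap.comp_apply,
        Submodule.projectionOnto_apply_left hp ⟨x, hx⟩, Submodule.coe_subtype]
    have hrange_e : LinearMap.range e ≤ LinearMap.range f := by
      rw [hedef]
      exact (LinearMap.range_comp_le_range _ _).trans_eq (Submodule.range_subtype _)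
    have hrangefN : LinearMap.range f ≤ N := by
      rintro x ⟨l, rfl⟩
      rw [hf]
      simp only [Finsupp.lsum_apply]
      exact Submodule.finsuppSum_mem _ _ _ _ (fun g _ => g.2 (LinearMap.mem_range_self g.1 _))
    refine ⟨e, ?_, ?_⟩
    · apply LinearMap.ext
      intro x
      exact heid (e x) (hrange_e (LinearMap.mem_range_self e x))
    · ext g
      constructor
      · intro hg
        refine ⟨g, LinearMap.ext fun x => ?_⟩
        have hgf : g x ∈ LinearMap.range f :=
          ⟨Finsupp.single ⟨g, hg⟩ x, by simp [hf]⟩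
        exact heid (g x) hgf
      · rintro ⟨s, rfl⟩
        exact (LinearMap.range_comp_le_range s e).trans (hrange_e.trans hrangefN)
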